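/- Let ν > 0, let G be a probability measure on (0,∞), let x ∈ ℝ and t > 0. Then the conditional null density satisfies the closed-form identity h_G(x, t) = (1/√(2π)) · (Γ((ν+1)/2)/Γ(ν/2)) · (ν/2)^{ν/2} · ((ν+1)/2)^{−(ν+1)/2} · t^{ν/2−1} · ((x² + ν t)/(ν+1))^{−(ν−1)/2} · f_G((x² + ν t)/(ν+1); ν+1) / f_G(t; ν). -/

import Mathlib

open MeasureTheory Real
open scoped ENNReal

/-- `g_ν(t; σ²)`: the density of `(σ²/ν)·χ²_ν`, i.e. the Gamma(ν/2, rate ν/(2σ²)) density. -/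
noncomputable def gdens (ν σ2 t : ℝ) : ℝ :=
  (1 / Real.Gamma (ν / 2)) * (ν / (2 * σ2)) ^ (ν / 2) * t ^ (ν / 2 - 1) *
    Real.exp (-(ν * t) / (2 * σ2))

/-- `φ(x; σ²) = (2πσ²)^{−1/2}·exp(−x²/(2σ²))`: the `N(0, σ²)` density. -/
noncomputable def phidens (x σ2 : ℝ) : ℝ :=
  (2 * Real.pi * σ2) ^ (-(1 / 2) : ℝ) * Real.exp (-(x ^ 2) / (2 * σ2))

/-- `f_G(t; ν) = ∫ g_ν(t; σ²) dG(σ²)`: the marginal density of `S²`. -/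
noncomputable def fGdens (G : Measure ℝ) (ν t : ℝ) : ℝ :=
  ∫ σ2, gdens ν σ2 t ∂G

/-- `h_G(x, t)`: the conditional null density of `X` given `μ = 0, S² = t`. -/
noncomputable def hGdens (G : Measure ℝ) (ν x t : ℝ) : ℝ :=
  (∫ σ2, phidens x σ2 * gdens ν σ2 t ∂G) / fGdens G ν t

lemma key_pointwise (ν x t : ℝ) (hν : 0 < ν) (ht : 0 < t) {σ2 : ℝ} (hσ : 0 < σ2) :
    phidens x σ2 * gdens ν σ2 t =
      ((1 / Real.sqrt (2 * Real.pi)) * (Real.Gamma ((ν + 1) / 2) / Real.Gamma (ν / 2)) *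
        (ν / 2) ^ (ν / 2) * ((ν + 1) / 2) ^ (-((ν + 1) / 2)) *
        t ^ (ν / 2 - 1) * ((x ^ 2 + ν * t) / (ν + 1)) ^ (-((ν - 1) / 2))) *
      gdens (ν + 1) σ2 ((x ^ 2 + ν * t) / (ν + 1)) := by
  have hν1 : (0:ℝ) < ν + 1 := by linarith
  have h2π : (0:ℝ) < 2 * Real.pi := by positivity
  have hu : (0:ℝ) < (x ^ 2 + ν * t) / (ν + 1) := by positivity
  have hΓν : (0:ℝ) < Real.Gamma (ν / 2) := Real.Gamma_pos_of_pos (by positivity)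
  have hΓν1 : (0:ℝ) < Real.Gamma ((ν + 1) / 2) := Real.Gamma_pos_of_pos (by positivity)
  unfold phidens gdens
  have e1 : (2 * Real.pi * σ2) ^ (-(1 / 2) : ℝ)
      = ((2 * Real.pi) ^ ((1:ℝ)/2))⁻¹ * (σ2 ^ ((1:ℝ)/2))⁻¹ := by
    rw [Real.mul_rpow h2π.le hσ.le, show (-(1/2) : ℝ) = -(1/2 : ℝ) by norm_num,
      Real.rpow_neg h2π.le, Real.rpow_neg hσ.le]
  have e2 : (ν / (2 * σ2)) ^ (ν / 2) = (ν / 2) ^ (ν / 2) * (σ2 ^ (ν/2))⁻¹ := by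
    rw [show ν / (2 * σ2) = (ν / 2) / σ2 by ring,
      Real.div_rpow (by positivity) hσ.le, div_eq_mul_inv]
  have e3 : ((ν + 1) / (2 * σ2)) ^ ((ν + 1) / 2)
      = ((ν + 1) / 2) ^ ((ν + 1) / 2) * (σ2 ^ ((ν+1)/2))⁻¹ := by
    rw [show (ν + 1) / (2 * σ2) = ((ν + 1) / 2) / σ2 by ring,
      Real.div_rpow (by positivity) hσ.le, div_eq_mul_inv]
  have e4 : ((ν + 1) / 2 : ℝ) ^ (-((ν + 1) / 2)) = (((ν + 1) / 2 : ℝ) ^ ((ν + 1) / 2))⁻¹ :=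
    Real.rpow_neg (by positivity) _
  have e5 : ((x ^ 2 + ν * t) / (ν + 1)) ^ (-((ν - 1) / 2))
      = (((x ^ 2 + ν * t) / (ν + 1)) ^ ((ν - 1) / 2))⁻¹ := Real.rpow_neg hu.le _
  have e6 : ((x ^ 2 + ν * t) / (ν + 1)) ^ ((ν + 1) / 2 - 1)
      = ((x ^ 2 + ν * t) / (ν + 1)) ^ ((ν - 1) / 2) := by
    congr 1; ring
  have e7 : σ2 ^ ((ν+1)/2) = σ2 ^ ((1:ℝ)/2) * σ2 ^ (ν/2) := by
    rw [← Real.rpow_add hσ]; congr 1; ring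
  have e8 : Real.exp (-(x ^ 2) / (2 * σ2))
      = Real.exp (-((ν + 1) * ((x ^ 2 + ν * t) / (ν + 1))) / (2 * σ2))
        * (Real.exp (-(ν * t) / (2 * σ2)))⁻¹ := by
    rw [← Real.exp_neg, ← Real.exp_add]; congr 1; field_simp; ring
  have esqrt : Real.sqrt (2 * Real.pi) = (2 * Real.pi) ^ ((1:ℝ)/2) :=
    Real.sqrt_eq_rpow _
  rw [e1, e2, e3, e4, e5, e6, e7, e8, esqrt]
  have p1 : ((2 * Real.pi) ^ ((1:ℝ)/2)) ≠ 0 := by positivity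
  have p2 : (σ2 ^ ((1:ℝ)/2)) ≠ 0 := by positivity
  have p3 : (σ2 ^ (ν/2)) ≠ 0 := by positivity
  have p4 : (((ν + 1) / 2 : ℝ) ^ ((ν + 1) / 2)) ≠ 0 := by positivity
  have p5 : (((x ^ 2 + ν * t) / (ν + 1)) ^ ((ν - 1) / 2)) ≠ 0 := by positivity
  have p6 : Real.exp (-(ν * t) / (2 * σ2)) ≠ 0 := Real.exp_ne_zero _
  field_simp

/-- closed-form expression for the conditional null density `h_G`. -/
theorem stmt4 (ν : ℝ) (hν : 0 < ν) (G : Measure ℝ) [IsProbabilityMeasure G]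
    (hGsupp : ∀ᵐ σ2 ∂G, 0 < σ2) (x t : ℝ) (ht : 0 < t) :
    hGdens G ν x t =
      (1 / Real.sqrt (2 * Real.pi)) * (Real.Gamma ((ν + 1) / 2) / Real.Gamma (ν / 2)) *
        (ν / 2) ^ (ν / 2) * ((ν + 1) / 2) ^ (-((ν + 1) / 2)) *
        t ^ (ν / 2 - 1) * ((x ^ 2 + ν * t) / (ν + 1)) ^ (-((ν - 1) / 2)) *
        (fGdens G (ν + 1) ((x ^ 2 + ν * t) / (ν + 1)) / fGdens G ν t) := by
  have hint : (∫ σ2, phidens x σ2 * gdens ν σ2 t ∂G)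
      = ((1 / Real.sqrt (2 * Real.pi)) * (Real.Gamma ((ν + 1) / 2) / Real.Gamma (ν / 2)) *
        (ν / 2) ^ (ν / 2) * ((ν + 1) / 2) ^ (-((ν + 1) / 2)) *
        t ^ (ν / 2 - 1) * ((x ^ 2 + ν * t) / (ν + 1)) ^ (-((ν - 1) / 2))) *
        fGdens G (ν + 1) ((x ^ 2 + ν * t) / (ν + 1)) := by
    unfold fGdens
    rw [← MeasureTheory.integral_const_mul]
    exact integral_congr_ae (hGsupp.mono fun σ2 hσ => key_pointwise ν x t hν ht hσ)
  unfold hGdens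
  rw [hint, mul_div_assoc]
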